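/- Let p be a prime and let r, m, e be positive integers with m ≥ r+2 and e ≥ 2. Then c_{p,r,m,e} = ∑ P_m(r(p−1)−d_{e−1}) · ∏_{i=0}^{e−2} M_{p,m}(r(p−1)+d_{i+1}·p−d_i), where the sum ranges over all (e−1)-tuples (d_{e−1},…,d_1) of integers with 1 ≤ d_i ≤ m−r−1 for every 1 ≤ i ≤ e−1, and where d_0 := 0. -/

import Mathlib

/-- `cSeq p r m e` is the number of `m`-tuples `(a_1,…,a_m)` of natural numbers with
`a_1+⋯+a_m = r(p^e−1)` such that `(a_1 mod p^i)+⋯+(a_m mod p^i) ≥ r(p^i−1)+p^i`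
for every `1 ≤ i ≤ e−1`; this is the `e`-th term of the complexity sequence of
the ring `T(V_r(K[x_1,…,x_m]))` of Enescu–Yao. -/
noncomputable def cSeq (p r m e : ℕ) : ℕ :=
  Nat.card {a : Fin m → ℕ // (∑ j, a j = r * (p ^ e - 1)) ∧
    ∀ i, 1 ≤ i → i ≤ e - 1 → r * (p ^ i - 1) + p ^ i ≤ ∑ j, a j % p ^ i}


/-- `Mpm p m i` is the number of `m`-tuples `(b_1,…,b_m)` of integers with
`0 ≤ b_j ≤ p−1` and `b_1+⋯+b_m = i`; it is the coefficient of `t^i` in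
`(1+t+⋯+t^{p−1})^m`. -/
def Mpm (p m : ℕ) (i : ℤ) : ℕ :=
  (Finset.univ.filter (fun b : Fin m → Fin p => (∑ j, ((b j : ℕ) : ℤ)) = i)).card


/-- `Pm m k = binom(k+m−1, m−1)` for `k ≥ 0`, and `0` for `k < 0`. -/
def Pm (m : ℕ) (k : ℤ) : ℕ :=
  if 0 ≤ k then (k.toNat + m - 1).choose (m - 1) else 0


/-- `dExt e d` extends the tuple `(d_1,…,d_{e−1})` to a function on `ℕ`, with
`d_0 = 0` and value `0` outside `[1, e−1]`. -/
def dExt (e : ℕ) (d : Fin (e - 1) → ℕ) (i : ℕ) : ℤ :=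
  if h : 1 ≤ i ∧ i ≤ e - 1 then (d ⟨i - 1, by omega⟩ : ℤ) else 0



open Finset


lemma mod_pow_eq_sum_digits (p : ℕ) (n : ℕ) : ∀ i : ℕ,
    n % p ^ i = ∑ k ∈ range i, n / p ^ k % p * p ^ k := by
  intro i
  induction i with
  | zero => simp [Nat.mod_one]
  | succ i ih =>
    rw [sum_range_succ, ← ih, pow_succ, Nat.mod_mul]
    ring

lemma sum_digits_lt (p E : ℕ) (hp : 0 < p) (b : ℕ → ℕ) (hb : ∀ k, k < E → b k < p) :
    ∑ k ∈ range E, b k * p ^ k < p ^ E := by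
  induction E with
  | zero => simp
  | succ E ih =>
    have h1 : ∑ k ∈ range E, b k * p ^ k < p ^ E :=
      ih (fun k hk => hb k (by omega))
    have h2 : b E < p := hb E (by omega)
    obtain ⟨q, rfl⟩ : ∃ q, p = q + 1 := ⟨p - 1, by omega⟩
    rw [sum_range_succ, pow_succ]
    have h3 : b E * (q+1) ^ E ≤ q * (q+1) ^ E := Nat.mul_le_mul_right _ (by omega)
    have h4 : (q+1) ^ E + q * (q+1) ^ E = (q+1) ^ E * (q+1) := by ring
    omega

/-- division/digit extraction for a base-p expansion with quotient -/
lemma div_pow_expansion (p E : ℕ) (hp : 0 < p) (b : ℕ → ℕ) (hb : ∀ k, k < E → b k < p)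
    (q : ℕ) : ∀ j, j ≤ E →
    (∑ k ∈ range E, b k * p ^ k + q * p ^ E) / p ^ j
      = ∑ k ∈ Ico j E, b k * p ^ (k - j) + q * p ^ (E - j) := by
  intro j
  induction j with
  | zero =>
    intro _
    simp only [pow_zero, Nat.div_one, Nat.sub_zero, range_eq_Ico, mul_one]
  | succ j ih =>
    intro hj
    have hj' : j < E := by omega
    have hdd : (∑ k ∈ range E, b k * p ^ k + q * p ^ E) / p ^ (j+1)
        = (∑ k ∈ range E, b k * p ^ k + q * p ^ E) / p ^ j / p := by
      rw [pow_succ, Nat.div_div_eq_div_mul]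
    rw [hdd, ih (by omega), sum_eq_sum_Ico_succ_bot hj']
    have hsplit : ∀ k ∈ Ico (j+1) E, b k * p ^ (k - j) = p * (b k * p ^ (k - (j+1))) := by
      intro k hk
      rw [mem_Ico] at hk
      have : k - j = (k - (j+1)) + 1 := by omega
      rw [this, pow_succ]
      ring
    rw [sum_congr rfl hsplit]
    have hE : p ^ (E - j) = p * p ^ (E - (j+1)) := by
      have : E - j = (E - (j+1)) + 1 := by omega
      rw [this, pow_succ]; ring
    rw [hE, Nat.sub_self, pow_zero, mul_one, ← Finset.mul_sum]
    have : b j + p * ∑ k ∈ Ico (j + 1) E, b k * p ^ (k - (j + 1)) + q * (p * p ^ (E - (j + 1)))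
        = b j + (∑ k ∈ Ico (j + 1) E, b k * p ^ (k - (j + 1)) + q * p ^ (E - (j + 1))) * p := by
      ring
    rw [this, Nat.add_mul_div_right _ _ hp, Nat.div_eq_of_lt (hb j hj'), zero_add]

lemma div_pow_top (p E : ℕ) (hp : 0 < p) (b : ℕ → ℕ) (hb : ∀ k, k < E → b k < p) (q : ℕ) :
    (∑ k ∈ range E, b k * p ^ k + q * p ^ E) / p ^ E = q := by
  rw [div_pow_expansion p E hp b hb q E le_rfl]
  simp

lemma digit_extract (p E : ℕ) (hp : 0 < p) (b : ℕ → ℕ) (hb : ∀ k, k < E → b k < p)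
    (q : ℕ) (j : ℕ) (hj : j < E) :
    (∑ k ∈ range E, b k * p ^ k + q * p ^ E) / p ^ j % p = b j := by
  rw [div_pow_expansion p E hp b hb q j (by omega), sum_eq_sum_Ico_succ_bot hj]
  have hsplit : ∀ k ∈ Ico (j+1) E, b k * p ^ (k - j) = p * (b k * p ^ (k - (j+1))) := by
    intro k hk
    rw [mem_Ico] at hk
    have : k - j = (k - (j+1)) + 1 := by omega
    rw [this, pow_succ]; ring
  rw [sum_congr rfl hsplit]
  have hE : p ^ (E - j) = p * p ^ (E - (j+1)) := by
    have : E - j = (E - (j+1)) + 1 := by omega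
    rw [this, pow_succ]; ring
  rw [hE, Nat.sub_self, pow_zero, mul_one, ← Finset.mul_sum]
  have : b j + p * ∑ k ∈ Ico (j + 1) E, b k * p ^ (k - (j + 1)) + q * (p * p ^ (E - (j + 1)))
      = b j + (∑ k ∈ Ico (j + 1) E, b k * p ^ (k - (j + 1)) + q * p ^ (E - (j + 1))) * p := by
    ring
  rw [this, Nat.add_mul_mod_self_right, Nat.mod_eq_of_lt (hb j hj)]

def tupleSymEquiv (m Q : ℕ) : {f : Fin m → ℕ // ∑ j, f j = Q} ≃ Sym (Fin m) Q where
  toFun f := ⟨∑ j, Multiset.replicate (f.1 j) j, by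
    rw [Multiset.card_sum]
    simpa [Multiset.card_replicate] using f.2⟩
  invFun s := ⟨fun j => Multiset.count j s.1, by
    have h1 : ∑ j : Fin m, Multiset.count j s.1
        = ∑ j ∈ s.1.toFinset, Multiset.count j s.1 := by
      refine (Finset.sum_subset (Finset.subset_univ _) ?_).symm
      intro x _ hx
      simpa [Multiset.count_eq_zero] using fun h => hx (Multiset.mem_toFinset.mpr h)
    rw [h1, Multiset.toFinset_sum_count_eq, s.2]⟩
  left_inv f := by
    apply Subtype.ext
    funext j
    simp [Multiset.count_sum', Multiset.count_replicate]
  right_inv s := by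
    apply Subtype.ext
    ext x
    simp only [Multiset.count_sum', Multiset.count_replicate]
    simp
theorem starsBars (m Q : ℕ) (hm : 0 < m) :
    Nat.card {f : Fin m → ℕ // ∑ j, f j = Q} = (Q + m - 1).choose (m - 1) := by
  rw [Nat.card_congr (tupleSymEquiv m Q), Nat.card_eq_fintype_card, Sym.card_sym_eq_choose,
    Fintype.card_fin]
  have h1 : m + Q - 1 - Q = m - 1 := by omega
  rw [← Nat.choose_symm (by omega : Q ≤ m + Q - 1), h1]
  congr 1
  omega

lemma dExt_zero (e : ℕ) (d : Fin (e-1) → ℕ) : dExt e d 0 = 0 := by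
  simp [dExt]

lemma dExt_succ (e : ℕ) (d : Fin (e-1) → ℕ) (k : ℕ) (hk : k < e - 1) :
    dExt e d (k+1) = (d ⟨k, hk⟩ : ℤ) := by
  rw [dExt, dif_pos ⟨by omega, by omega⟩]
  exact congrArg _ (congrArg d (Fin.ext (by simp)))

lemma dExt_nonneg (e : ℕ) (d : Fin (e-1) → ℕ) (i : ℕ) : 0 ≤ dExt e d i := by
  unfold dExt; split <;> positivity

lemma sz_eq (p r e : ℕ) (d : Fin (e-1) → ℕ) (B : ℕ → ℕ)
    (hB : ∀ k : Fin (e-1), (B (k:ℕ) : ℤ) =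
      (r:ℤ) * ((p:ℤ) - 1) + dExt e d ((k:ℕ)+1) * p - dExt e d (k:ℕ))
    (i : ℕ) (hi : i ≤ e - 1) :
    ∑ k ∈ range i, (B k : ℤ) * (p:ℤ) ^ k
      = (r:ℤ) * ((p:ℤ)^i - 1) + dExt e d i * (p:ℤ)^i := by
  have h2 : ∀ k ∈ range i, (B k : ℤ) * (p:ℤ)^k
      = (r:ℤ)*((p:ℤ)-1)*(p:ℤ)^k
        + (dExt e d (k+1) * (p:ℤ)^(k+1) - dExt e d k * (p:ℤ)^k) := by
    intro k hk
    rw [mem_range] at hk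
    rw [hB ⟨k, by omega⟩, pow_succ]
    push_cast
    ring
  rw [sum_congr rfl h2, sum_add_distrib, ← mul_sum,
    sum_range_sub (fun k => dExt e d k * (p:ℤ)^k), dExt_zero]
  have h3 : ((p:ℤ) - 1) * (∑ k ∈ range i, (p:ℤ)^k) = (p:ℤ)^i - 1 := by
    rw [mul_comm, geom_sum_mul]
  have h4 : (r:ℤ)*((p:ℤ)-1)*(∑ k ∈ range i, (p:ℤ)^k) = (r:ℤ) * ((p:ℤ)^i - 1) := by
    rw [mul_assoc, h3]
  rw [h4]
  ring

lemma core (p r e : ℕ) (d : Fin (e-1) → ℕ) (hp : 2 ≤ p) (hr : 0 < r) (he : 2 ≤ e)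
    (hd : ∀ k, 1 ≤ d k) (Q : ℕ) (B : ℕ → ℕ) :
    (Q * p ^ (e-1) + ∑ k ∈ range (e-1), B k * p ^ k = r * (p ^ e - 1)
      ∧ (∀ i, 1 ≤ i → i ≤ e - 1 →
          r * (p ^ i - 1) + p ^ i ≤ ∑ k ∈ range i, B k * p ^ k)
      ∧ ∀ k : Fin (e-1),
          (∑ t ∈ range ((k:ℕ)+1), B t * p ^ t - r * (p ^ ((k:ℕ)+1) - 1)) / p ^ ((k:ℕ)+1) = d k)
    ↔ ((Q : ℤ) = (r:ℤ) * ((p:ℤ) - 1) - dExt e d (e-1)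
      ∧ ∀ k : Fin (e-1), (B (k:ℕ) : ℤ) =
          (r:ℤ) * ((p:ℤ) - 1) + dExt e d ((k:ℕ)+1) * p - dExt e d (k:ℕ)) := by
  have hE1 : 1 ≤ e - 1 := by omega
  have hpe1 : (1:ℕ) ≤ p ^ e := Nat.one_le_pow _ _ (by omega)
  set sz : ℕ → ℤ := fun i => ∑ k ∈ range i, (B k : ℤ) * (p:ℤ) ^ k with hszdef
  have hszcast : ∀ i, ((∑ k ∈ range i, B k * p ^ k : ℕ) : ℤ) = sz i := by
    intro i; push_cast; rfl
  constructor
  · rintro ⟨hTot, hIneq, hD⟩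
    have hTotZ : (Q:ℤ) * (p:ℤ)^(e-1) + sz (e-1) = (r:ℤ) * ((p:ℤ)^e - 1) := by
      have h := congrArg (Nat.cast : ℕ → ℤ) hTot
      push_cast [Nat.cast_sub hpe1] at h
      rw [← hszcast (e-1)]
      push_cast
      linarith [h]
    have hdvd : ∀ i, 1 ≤ i → i ≤ e - 1 → (p:ℤ)^i ∣ sz i - (r:ℤ) * ((p:ℤ)^i - 1) := by
      intro i hi1 hi2
      have hsplit : sz i + ∑ k ∈ Ico i (e-1), (B k:ℤ) * (p:ℤ)^k = sz (e-1) := by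
        simp only [hszdef, range_eq_Ico]
        exact sum_Ico_consecutive _ (by omega) (by omega)
      have hkey : sz i - (r:ℤ) * ((p:ℤ)^i - 1)
          = ((r:ℤ)*(p:ℤ)^e - (r:ℤ)*(p:ℤ)^i) - (Q:ℤ)*(p:ℤ)^(e-1)
            - ∑ k ∈ Ico i (e-1), (B k:ℤ)*(p:ℤ)^k := by
        linear_combination hTotZ + hsplit
      rw [hkey]
      have hpe : (p:ℤ)^e = (p:ℤ)^i * (p:ℤ)^(e-i) := by
        rw [← pow_add]; congr 1; omega
      refine dvd_sub (dvd_sub ⟨(r:ℤ) * (p:ℤ)^(e-i) - r, by rw [hpe]; ring⟩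
        (Dvd.dvd.mul_left (pow_dvd_pow _ (by omega)) _)) (dvd_sum ?_)
      intro k hk
      rw [mem_Ico] at hk
      exact Dvd.dvd.mul_left (pow_dvd_pow _ (by omega)) _
    have hb : ∀ k : Fin (e-1), sz ((k:ℕ)+1)
        = (r:ℤ) * ((p:ℤ)^((k:ℕ)+1) - 1) + (d k : ℤ) * (p:ℤ)^((k:ℕ)+1) := by
      intro k
      have hi1 : 1 ≤ (k:ℕ)+1 := by omega
      have hi2 : (k:ℕ)+1 ≤ e - 1 := by omega
      have hs := hIneq _ hi1 hi2
      have hpix : (1:ℕ) ≤ p ^ ((k:ℕ)+1) := Nat.one_le_pow _ _ (by omega)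
      have htz : ((∑ t ∈ range ((k:ℕ)+1), B t * p ^ t - r * (p^((k:ℕ)+1) - 1) : ℕ) : ℤ)
          = sz ((k:ℕ)+1) - (r:ℤ) * ((p:ℤ)^((k:ℕ)+1) - 1) := by
        rw [Nat.cast_sub (by omega), hszcast, Nat.cast_mul, Nat.cast_sub hpix]
        push_cast
        ring
      have hdvdN : p ^ ((k:ℕ)+1) ∣
          (∑ t ∈ range ((k:ℕ)+1), B t * p ^ t - r * (p^((k:ℕ)+1) - 1)) := by
        have h := hdvd _ hi1 hi2
        rw [← htz] at h
        exact_mod_cast h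
      have ht : (∑ t ∈ range ((k:ℕ)+1), B t * p ^ t - r * (p^((k:ℕ)+1) - 1))
          = p ^ ((k:ℕ)+1) * d k := by
        rw [← Nat.mul_div_cancel' hdvdN, hD k]
      have h2 := congrArg (Nat.cast : ℕ → ℤ) ht
      rw [htz] at h2
      push_cast at h2
      linarith [h2]
    have hszAll : ∀ i, i ≤ e - 1 →
        sz i = (r:ℤ) * ((p:ℤ)^i - 1) + dExt e d i * (p:ℤ)^i := by
      intro i hi
      match i with
      | 0 => simp [hszdef, dExt_zero]
      | (k+1) =>
        rw [dExt_succ e d k (by omega)]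
        simpa using hb ⟨k, by omega⟩
    constructor
    · have h1 := hszAll (e-1) le_rfl
      have hpE : (p:ℤ)^e = (p:ℤ)^(e-1) * p := by rw [← pow_succ]; congr 1; omega
      have hne : ((p:ℤ)^(e-1)) ≠ 0 := by positivity
      have hcancel : ((Q:ℤ) - ((r:ℤ)*((p:ℤ)-1) - dExt e d (e-1))) * (p:ℤ)^(e-1) = 0 := by
        rw [h1, hpE] at hTotZ
        linear_combination hTotZ
      have := (mul_eq_zero.mp hcancel).resolve_right hne
      linarith [this]
    · intro k
      have h1 := hszAll ((k:ℕ)+1) (by omega)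
      have h0 := hszAll (k:ℕ) (by omega)
      have hstep : sz ((k:ℕ)+1) = sz (k:ℕ) + (B (k:ℕ):ℤ) * (p:ℤ)^(k:ℕ) := by
        simp [hszdef, sum_range_succ]
      have hne : ((p:ℤ)^(k:ℕ)) ≠ 0 := by positivity
      have hcancel : ((B (k:ℕ):ℤ)
          - ((r:ℤ)*((p:ℤ)-1) + dExt e d ((k:ℕ)+1)*p - dExt e d (k:ℕ))) * (p:ℤ)^(k:ℕ) = 0 := by
        rw [h1, h0] at hstep
        have hp1 : (p:ℤ)^((k:ℕ)+1) = (p:ℤ)^(k:ℕ) * p := pow_succ _ _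
        rw [hp1] at hstep
        linear_combination -hstep
      have := (mul_eq_zero.mp hcancel).resolve_right hne
      linarith [this]
  · rintro ⟨hQ, hB⟩
    have hsz : ∀ i, i ≤ e - 1 → sz i = (r:ℤ) * ((p:ℤ)^i - 1) + dExt e d i * (p:ℤ)^i :=
      fun i hi => sz_eq p r e d B hB i hi
    refine ⟨?_, ?_, ?_⟩
    · have hgoal : (Q:ℤ) * (p:ℤ)^(e-1) + sz (e-1) = (r:ℤ)*((p:ℤ)^e - 1) := by
        rw [hsz (e-1) le_rfl, hQ]
        have hpE : (p:ℤ)^e = (p:ℤ)^(e-1) * p := by rw [← pow_succ]; congr 1; omega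
        rw [hpE]; ring
      have h2 : ((Q * p^(e-1) + ∑ k ∈ range (e-1), B k * p^k : ℕ):ℤ)
          = ((r * (p^e - 1) : ℕ):ℤ) := by
        push_cast [Nat.cast_sub hpe1]
        exact hgoal
      exact Nat.cast_injective h2
    · intro i hi1 hi2
      have h1 := hsz i hi2
      have hd1 : 1 ≤ dExt e d i := by
        obtain ⟨k, rfl⟩ : ∃ k, i = k + 1 := ⟨i-1, by omega⟩
        rw [dExt_succ e d k (by omega)]
        exact_mod_cast hd ⟨k, by omega⟩
      have hpix : (1:ℕ) ≤ p^i := Nat.one_le_pow _ _ (by omega)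
      have hZ : ((r * (p^i - 1) + p^i : ℕ):ℤ) ≤ sz i := by
        push_cast [Nat.cast_sub hpix]
        rw [h1]
        have hppow : (0:ℤ) < (p:ℤ)^i := by positivity
        nlinarith [dExt_nonneg e d i]
      rw [← hszcast i] at hZ
      exact_mod_cast hZ
    · intro k
      have h1 := hsz ((k:ℕ)+1) (by omega)
      rw [dExt_succ e d (k:ℕ) (by omega)] at h1
      have hpix : (1:ℕ) ≤ p^((k:ℕ)+1) := Nat.one_le_pow _ _ (by omega)
      have hnat : ∑ t ∈ range ((k:ℕ)+1), B t * p^t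
          = r * (p^((k:ℕ)+1) - 1) + d k * p^((k:ℕ)+1) := by
        have h2 : ((∑ t ∈ range ((k:ℕ)+1), B t * p^t : ℕ):ℤ)
            = ((r * (p^((k:ℕ)+1) - 1) + d k * p^((k:ℕ)+1) : ℕ):ℤ) := by
          rw [hszcast, h1]
          push_cast [Nat.cast_sub hpix]
          ring
        exact Nat.cast_injective h2
      rw [hnat, Nat.add_sub_cancel_left,
        Nat.mul_div_cancel _ (Nat.pow_pos (by omega))]

section reconstruct
variable (p E m : ℕ)

private def nval (q : Fin m → ℕ) (b : Fin E → Fin m → Fin p) (j : Fin m) : ℕ :=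
  q j * p ^ E + ∑ k : Fin E, ((b k j : ℕ)) * p ^ (k : ℕ)

private def bfun (b : Fin E → Fin m → Fin p) (j : Fin m) (t : ℕ) : ℕ :=
  if h : t < E then (b ⟨t, h⟩ j : ℕ) else 0

lemma bfun_lt (hp : 0 < p) (b : Fin E → Fin m → Fin p) (j : Fin m) :
    ∀ t, t < E → bfun p E m b j t < p := by
  intro t ht
  simp only [bfun, dif_pos ht]
  exact (b ⟨t, ht⟩ j).isLt

lemma nval_eq (q : Fin m → ℕ) (b : Fin E → Fin m → Fin p) (j : Fin m) :
    nval p E m q b j = ∑ t ∈ range E, bfun p E m b j t * p ^ t + q j * p ^ E := by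
  rw [nval, add_comm]
  congr 1
  rw [← Fin.sum_univ_eq_sum_range (fun t => bfun p E m b j t * p ^ t) E]
  exact sum_congr rfl (fun k _ => by simp [bfun, k.isLt])

lemma reconstruct_div (hp : 0 < p) (q : Fin m → ℕ) (b : Fin E → Fin m → Fin p) (j : Fin m) :
    nval p E m q b j / p ^ E = q j := by
  rw [nval_eq]
  exact div_pow_top p E hp _ (bfun_lt p E m hp b j) _

lemma reconstruct_digit (hp : 0 < p) (q : Fin m → ℕ) (b : Fin E → Fin m → Fin p)
    (j : Fin m) (k : Fin E) :
    nval p E m q b j / p ^ (k : ℕ) % p = (b k j : ℕ) := by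
  rw [nval_eq, digit_extract p E hp _ (bfun_lt p E m hp b j) _ _ k.isLt]
  simp [bfun, k.isLt]

end reconstruct

noncomputable def fiberEquiv (p E m : ℕ) (hp : 0 < p) (Qz : ℤ) (Bz : Fin E → ℤ) :
    {a : Fin m → ℕ // ((∑ j, a j / p ^ E : ℕ) : ℤ) = Qz
        ∧ ∀ k : Fin E, ((∑ j, a j / p ^ (k : ℕ) % p : ℕ) : ℤ) = Bz k}
    ≃ {q : Fin m → ℕ // ((∑ j, q j : ℕ) : ℤ) = Qz}
      × (Π k : Fin E, {b : Fin m → Fin p // (∑ j, ((b j : ℕ) : ℤ)) = Bz k}) where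
  toFun a := ⟨⟨fun j => a.1 j / p ^ E, a.2.1⟩,
    fun k => ⟨fun j => ⟨a.1 j / p ^ (k : ℕ) % p, Nat.mod_lt _ hp⟩, by
      have h := a.2.2 k
      push_cast at h ⊢
      exact h⟩⟩
  invFun qb := ⟨nval p E m qb.1.1 (fun k => (qb.2 k).1), by
    constructor
    · have h : (∑ j, nval p E m qb.1.1 (fun k => (qb.2 k).1) j / p ^ E) = ∑ j, qb.1.1 j :=
        sum_congr rfl (fun j _ => reconstruct_div p E m hp _ _ j)
      rw [h]
      exact qb.1.2
    · intro k
      have h : (∑ j, nval p E m qb.1.1 (fun k => (qb.2 k).1) j / p ^ (k:ℕ) % p)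
          = ∑ j, ((qb.2 k).1 j : ℕ) :=
        sum_congr rfl (fun j _ => reconstruct_digit p E m hp _ _ j k)
      rw [h]
      have h2 := (qb.2 k).2
      push_cast at h2 ⊢
      exact h2⟩
  left_inv a := by
    apply Subtype.ext
    funext j
    show a.1 j / p ^ E * p ^ E + ∑ k : Fin E, (a.1 j / p ^ (k:ℕ) % p) * p ^ (k:ℕ) = a.1 j
    rw [Fin.sum_univ_eq_sum_range (fun t => a.1 j / p ^ t % p * p ^ t) E,
      ← mod_pow_eq_sum_digits, mul_comm]
    exact Nat.div_add_mod _ _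
  right_inv qb := by
    refine Prod.ext ?_ ?_
    · apply Subtype.ext
      funext j
      exact reconstruct_div p E m hp _ _ j
    · funext k
      apply Subtype.ext
      funext j
      apply Fin.ext
      exact reconstruct_digit p E m hp _ _ j k

lemma fiber_count (p E m : ℕ) (hp : 2 ≤ p) (hm : 0 < m) (Qz : ℤ) (Bz : Fin E → ℤ) :
    Nat.card {a : Fin m → ℕ // ((∑ j, a j / p ^ E : ℕ) : ℤ) = Qz
        ∧ ∀ k : Fin E, ((∑ j, a j / p ^ (k : ℕ) % p : ℕ) : ℤ) = Bz k}
    = Pm m Qz * ∏ k : Fin E, Mpm p m (Bz k) := by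
  rw [Nat.card_congr (fiberEquiv p E m (by omega) Qz Bz), Nat.card_prod, Nat.card_pi]
  congr 1
  · -- Pm part
    by_cases hQ : 0 ≤ Qz
    · have hiff : ∀ q : Fin m → ℕ, ((∑ j, q j : ℕ) : ℤ) = Qz ↔ (∑ j, q j) = Qz.toNat := by
        intro q
        rw [← Int.toNat_of_nonneg hQ]
        exact_mod_cast Iff.rfl
      rw [Nat.card_congr (Equiv.subtypeEquivRight hiff), starsBars m Qz.toNat hm,
        Pm, if_pos hQ]
    · have : IsEmpty {q : Fin m → ℕ // ((∑ j, q j : ℕ) : ℤ) = Qz} := by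
        refine ⟨fun q => ?_⟩
        have := q.2
        omega
      rw [Nat.card_of_isEmpty, Pm, if_neg hQ]
  · refine Finset.prod_congr rfl (fun k _ => ?_)
    rw [Nat.card_eq_fintype_card, Fintype.card_subtype, Mpm]

section trans
variable {m : ℕ} (p : ℕ) (a : Fin m → ℕ)

lemma sum_mod_eq (i : ℕ) :
    ∑ j, a j % p ^ i = ∑ k ∈ range i, (∑ j, a j / p ^ k % p) * p ^ k := by
  calc ∑ j, a j % p ^ i = ∑ j, ∑ k ∈ range i, (a j / p ^ k % p) * p ^ k :=
        sum_congr rfl (fun j _ => mod_pow_eq_sum_digits p (a j) i)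
    _ = ∑ k ∈ range i, ∑ j, (a j / p ^ k % p) * p ^ k := sum_comm
    _ = ∑ k ∈ range i, (∑ j, a j / p ^ k % p) * p ^ k := by
        exact sum_congr rfl (fun k _ => (sum_mul ..).symm)

lemma sum_total_eq (E : ℕ) :
    ∑ j, a j = (∑ j, a j / p ^ E) * p ^ E + ∑ k ∈ range E, (∑ j, a j / p ^ k % p) * p ^ k := by
  rw [← sum_mod_eq, sum_mul, ← sum_add_distrib]
  exact sum_congr rfl (fun j _ => by rw [mul_comm]; exact (Nat.div_add_mod _ _).symm)

end trans

lemma stepD (p r m e : ℕ) (hp : 2 ≤ p) (hr : 0 < r) (he : 2 ≤ e)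
    (d : Fin (e-1) → ℕ) (hd : ∀ k, 1 ≤ d k) (a : Fin m → ℕ) :
    (((∑ j, a j = r * (p ^ e - 1)) ∧
      ∀ i, 1 ≤ i → i ≤ e - 1 → r * (p ^ i - 1) + p ^ i ≤ ∑ j, a j % p ^ i) ∧
      (fun k : Fin (e-1) =>
        (∑ j, a j % p ^ ((k:ℕ)+1) - r * (p ^ ((k:ℕ)+1) - 1)) / p ^ ((k:ℕ)+1)) = d)
    ↔ (((∑ j, a j / p ^ (e-1) : ℕ) : ℤ) = (r:ℤ) * ((p:ℤ) - 1) - dExt e d (e-1)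
      ∧ ∀ k : Fin (e-1), ((∑ j, a j / p ^ (k:ℕ) % p : ℕ) : ℤ) =
          (r:ℤ) * ((p:ℤ) - 1) + dExt e d ((k:ℕ)+1) * p - dExt e d (k:ℕ)) := by
  have hcore := core p r e d hp hr he hd (∑ j, a j / p ^ (e-1)) (fun k => ∑ j, a j / p ^ k % p)
  rw [← hcore, funext_iff]
  constructor
  · rintro ⟨⟨h1, h2⟩, h3⟩
    refine ⟨?_, ?_, ?_⟩
    · rw [← sum_total_eq]; exact h1
    · intro i hi1 hi2; rw [← sum_mod_eq]; exact h2 i hi1 hi2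
    · intro k; rw [← sum_mod_eq]; exact h3 k
  · rintro ⟨h1, h2, h3⟩
    refine ⟨⟨?_, ?_⟩, ?_⟩
    · rw [sum_total_eq p a (e-1)]; exact h1
    · intro i hi1 hi2; rw [sum_mod_eq]; exact h2 i hi1 hi2
    · intro k; rw [sum_mod_eq]; exact h3 k

lemma natCard_eq_filter {α : Type*} [DecidableEq α] (S : Finset α) (P : α → Prop)
    [DecidablePred P] (h : ∀ a, P a → a ∈ S) :
    Nat.card {a // P a} = (S.filter P).card := by
  rw [← Fintype.card_coe (S.filter P), ← Nat.card_eq_fintype_card]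
  exact Nat.card_congr (Equiv.subtypeEquivRight (fun a =>
    ⟨fun hp => mem_filter.mpr ⟨h a hp, hp⟩, fun hm => (mem_filter.mp hm).2⟩))


/-- the closed formula for `c_{p,r,m,e}` as a sum over carry-over
tuples `(d_{e−1},…,d_1)` with `1 ≤ d_i ≤ m−r−1` and `d_0 = 0`. -/
theorem stmt_8 (p r m e : ℕ) (hp : p.Prime) (hr : 0 < r) (he : 2 ≤ e)
    (hm : r + 2 ≤ m) :
    cSeq p r m e =
      ∑ d ∈ Fintype.piFinset (fun _ : Fin (e - 1) => Finset.Icc 1 (m - r - 1)),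
        Pm m ((r : ℤ) * (p - 1) - dExt e d (e - 1)) *
          ∏ i ∈ Finset.range (e - 1),
            Mpm p m ((r : ℤ) * (p - 1) + dExt e d (i + 1) * p - dExt e d i) := by
  classical
  have hp2 : 2 ≤ p := hp.two_le
  set N := r * (p ^ e - 1) with hN
  set P : (Fin m → ℕ) → Prop := fun a =>
    (∑ j, a j = r * (p ^ e - 1)) ∧
      ∀ i, 1 ≤ i → i ≤ e - 1 → r * (p ^ i - 1) + p ^ i ≤ ∑ j, a j % p ^ i with hP
  set D : (Fin m → ℕ) → (Fin (e-1) → ℕ) := fun a k =>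
    (∑ j, a j % p ^ ((k:ℕ)+1) - r * (p ^ ((k:ℕ)+1) - 1)) / p ^ ((k:ℕ)+1) with hD
  set S : Finset (Fin m → ℕ) := Fintype.piFinset (fun _ : Fin m => Finset.range (N+1)) with hS
  set T := Fintype.piFinset (fun _ : Fin (e - 1) => Finset.Icc 1 (m - r - 1)) with hT
  have hmemS : ∀ a : Fin m → ℕ, P a → a ∈ S := by
    intro a ha
    rw [hS, Fintype.mem_piFinset]
    intro j
    rw [mem_range]
    have : a j ≤ ∑ j, a j := Finset.single_le_sum (fun _ _ => Nat.zero_le _) (mem_univ j)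
    omega
  -- step A
  have hA : cSeq p r m e = (S.filter P).card := natCard_eq_filter S P hmemS
  -- bounds on D
  have hDT : ∀ a ∈ S.filter P, D a ∈ T := by
    intro a ha
    rw [mem_filter] at ha
    obtain ⟨-, h1, h2⟩ := ha
    rw [hT, Fintype.mem_piFinset]
    intro k
    rw [mem_Icc]
    have hi2 : (k:ℕ) + 1 ≤ e - 1 := by omega
    have hs := h2 ((k:ℕ)+1) (by omega) hi2
    have hpipos : 0 < p ^ ((k:ℕ)+1) := Nat.pow_pos (by omega)
    have hsle : ∑ j, a j % p ^ ((k:ℕ)+1) ≤ m * (p ^ ((k:ℕ)+1) - 1) := by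
      calc ∑ j, a j % p ^ ((k:ℕ)+1) ≤ ∑ _j : Fin m, (p ^ ((k:ℕ)+1) - 1) :=
            Finset.sum_le_sum (fun j _ => by
              have := Nat.mod_lt (a j) hpipos
              omega)
        _ = m * (p ^ ((k:ℕ)+1) - 1) := by
            rw [sum_const, card_univ, Fintype.card_fin, smul_eq_mul]
    simp only [hD]
    constructor
    · rw [Nat.le_div_iff_mul_le hpipos]
      omega
    · have hlt : (∑ j, a j % p ^ ((k:ℕ)+1) - r * (p ^ ((k:ℕ)+1) - 1)) / p ^ ((k:ℕ)+1)
          < m - r := by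
        rw [Nat.div_lt_iff_lt_mul hpipos]
        have e1 : (m - r) * (p ^ ((k:ℕ)+1) - 1) < (m - r) * p ^ ((k:ℕ)+1) :=
          (Nat.mul_lt_mul_left (show 0 < m - r by omega)).mpr (by omega)
        have e2 : m * (p ^ ((k:ℕ)+1) - 1) - r * (p ^ ((k:ℕ)+1) - 1)
            = (m - r) * (p ^ ((k:ℕ)+1) - 1) := by
          rw [Nat.sub_mul]
        omega
      omega
  -- step B
  have hB : (S.filter P).card = ∑ d ∈ T, ((S.filter P).filter (fun a => D a = d)).card :=
    Finset.card_eq_sum_card_fiberwise hDT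
  rw [hA, hB]
  refine Finset.sum_congr rfl (fun d hd => ?_)
  have hdmem : ∀ k, 1 ≤ d k ∧ d k ≤ m - r - 1 := by
    intro k
    have := (Fintype.mem_piFinset.mp (hT ▸ hd)) k
    rwa [mem_Icc] at this
  -- step C
  have hC : ((S.filter P).filter (fun a => D a = d)).card
      = Nat.card {a : Fin m → ℕ // P a ∧ D a = d} := by
    rw [filter_filter]
    exact (natCard_eq_filter S _ (fun a ha => hmemS a ha.1)).symm
  rw [hC]
  -- step D
  have hDiff : ∀ a : Fin m → ℕ, (P a ∧ D a = d) ↔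
      (((∑ j, a j / p ^ (e-1) : ℕ) : ℤ) = (r:ℤ) * ((p:ℤ) - 1) - dExt e d (e-1)
        ∧ ∀ k : Fin (e-1), ((∑ j, a j / p ^ (k:ℕ) % p : ℕ) : ℤ) =
            (r:ℤ) * ((p:ℤ) - 1) + dExt e d ((k:ℕ)+1) * p - dExt e d (k:ℕ)) := by
    intro a
    exact stepD p r m e hp2 hr he d (fun k => (hdmem k).1) a
  rw [Nat.card_congr (Equiv.subtypeEquivRight hDiff)]
  -- step E
  rw [fiber_count p (e-1) m hp2 (by omega) _ _]
  congr 1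
  rw [Finset.prod_range (fun i => Mpm p m ((r:ℤ) * ((p:ℤ) - 1) + dExt e d (i+1) * p - dExt e d i))]
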